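/- arXiv:2503.14398 — 2 statements merged into one kernel-verified Lean document; each statement's English description precedes it below -/
import Mathlib

section
/- Let u: ℝ^n → [0,∞) be log-Hölder continuous at infinity with constant C_∞ and 0 < u_∞ < ∞, and for t > 0 set R_t(x) = (e+|x|)^{−nt}. Then for any measurable set E of finite measure and any measurable F with 0 ≤ F(y) ≤ 1 on E: ∫_E F(y)^{u(y)} dy ≤ e^{ntC_∞} ∫_E F(y)^{u_∞} dy + ∫_E R_t(y)^{u_−} dy, and symmetrically ∫_E F(y)^{u_∞} dy ≤ e^{ntC_∞} ∫_E F(y)^{u(y)} dy + ∫_E R_t(y)^{u_−} dy. -/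
open MeasureTheory ENNReal

noncomputable section

abbrev Euc (n : ℕ) := EuclideanSpace ℝ (Fin n)

/-- Local log-Hölder continuity with constant `C0`. -/
def LocLH {n : ℕ} (r : Euc n → ℝ) (C0 : ℝ) : Prop :=
  ∀ x y : Euc n, dist x y < 1 / 2 → |r x - r y| ≤ C0 / (-Real.log (dist x y))

/-- Log-Hölder continuity at infinity with constant `Ci` and limit value `rinf`. -/
def InfLH {n : ℕ} (r : Euc n → ℝ) (Ci rinf : ℝ) : Prop :=
  ∀ x : Euc n, |r x - rinf| ≤ Ci / Real.log (Real.exp 1 + ‖x‖)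

/-- Pointwise key inequality. -/
lemma ptwise (a p q um c s b : ℝ) (ha0 : 0 ≤ a) (ha1 : a ≤ 1)
    (hump : um ≤ p) (humq : um ≤ q) (hum0 : 0 ≤ um)
    (hb : Real.exp 1 ≤ b) (hpq : |p - q| ≤ c / Real.log b) (hs : 0 ≤ s) :
    a ^ p ≤ Real.exp (s * c) * a ^ q + (b ^ (-s)) ^ um := by
  have hb0 : (0:ℝ) < b := lt_of_lt_of_le (Real.exp_pos 1) hb
  have hL : (1:ℝ) ≤ Real.log b := by
    calc (1:ℝ) = Real.log (Real.exp 1) := (Real.log_exp 1).symm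
    _ ≤ Real.log b := Real.log_le_log (Real.exp_pos 1) hb
  have hL0 : (0:ℝ) < Real.log b := lt_of_lt_of_le one_pos hL
  have hR0 : (0:ℝ) < b ^ (-s) := Real.rpow_pos_of_pos hb0 _
  have hterm : 0 ≤ Real.exp (s * c) * a ^ q := by positivity
  have hc : 0 ≤ c := by
    have h1 : 0 ≤ c / Real.log b := le_trans (abs_nonneg _) hpq
    have h2 := mul_nonneg h1 hL0.le
    rwa [div_mul_cancel₀ c hL0.ne'] at h2
  rcases le_or_gt a (b ^ (-s)) with h | h
  · -- a ≤ R : a^p ≤ R^um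
    have key : a ^ p ≤ (b ^ (-s)) ^ um := by
      rcases eq_or_lt_of_le ha0 with h0 | h0
      · rcases eq_or_ne p 0 with hp | hp
        · have hum : um = 0 := le_antisymm (hp ▸ hump) hum0
          simp [hp, hum]
        · rw [← h0, Real.zero_rpow hp]
          positivity
      · calc a ^ p ≤ a ^ um := Real.rpow_le_rpow_of_exponent_ge h0 ha1 hump
        _ ≤ (b ^ (-s)) ^ um := Real.rpow_le_rpow ha0 h hum0
    linarith
  · -- R < a
    have ha' : 0 < a := lt_trans hR0 h
    have hpq' : -(c / Real.log b) ≤ p - q := neg_le_of_abs_le hpq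
    have h1 : a ^ (p - q) ≤ a ^ (-(c / Real.log b)) :=
      Real.rpow_le_rpow_of_exponent_ge ha' ha1 hpq'
    have h2 : a ^ (-(c / Real.log b)) ≤ (b ^ (-s)) ^ (-(c / Real.log b)) :=
      Real.rpow_le_rpow_of_nonpos hR0 h.le (by simp [div_nonneg hc hL0.le])
    have h3 : (b ^ (-s)) ^ (-(c / Real.log b)) = Real.exp (s * c) := by
      rw [← Real.rpow_mul hb0.le, Real.rpow_def_of_pos hb0]
      congr 1
      field_simp
    have h4 : a ^ p = a ^ q * a ^ (p - q) := by
      rw [← Real.rpow_add ha']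
      ring_nf
    calc a ^ p = a ^ q * a ^ (p - q) := h4
      _ ≤ a ^ q * Real.exp (s * c) := by
          exact mul_le_mul_of_nonneg_left (le_trans h1 (h2.trans_eq h3))
            (Real.rpow_nonneg ha0 q)
      _ = Real.exp (s * c) * a ^ q := mul_comm _ _
      _ ≤ Real.exp (s * c) * a ^ q + (b ^ (-s)) ^ um :=
          le_add_of_nonneg_right (by positivity)

/-- Integral form of the key inequality. -/
lemma integ_aux {n : ℕ} (p q : Euc n → ℝ) (hq : Measurable q)
    (um c s : ℝ) (hum0 : 0 ≤ um) (hump : ∀ y, um ≤ p y) (humq : ∀ y, um ≤ q y)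
    (hpq : ∀ y : Euc n, |p y - q y| ≤ c / Real.log (Real.exp 1 + ‖y‖)) (hs : 0 ≤ s)
    (E : Set (Euc n)) (hE : MeasurableSet E)
    (F : Euc n → ℝ) (hF : Measurable F) (hF01 : ∀ y ∈ E, 0 ≤ F y ∧ F y ≤ 1) :
    (∫⁻ y in E, ENNReal.ofReal (F y ^ p y)) ≤
      ENNReal.ofReal (Real.exp (s * c)) * (∫⁻ y in E, ENNReal.ofReal (F y ^ q y)) +
        ∫⁻ y in E, ENNReal.ofReal (((Real.exp 1 + ‖y‖) ^ (-s)) ^ um) := by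
  set g : Euc n → ℝ≥0∞ := fun y =>
    ENNReal.ofReal (Real.exp (s * c)) * ENNReal.ofReal (F y ^ q y) +
      ENNReal.ofReal (((Real.exp 1 + ‖y‖) ^ (-s)) ^ um) with hg_def
  have hmeas1 : Measurable fun y : Euc n => ENNReal.ofReal (F y ^ q y) :=
    ENNReal.measurable_ofReal.comp (hF.pow hq)
  have hmeasR : Measurable fun y : Euc n =>
      ENNReal.ofReal (((Real.exp 1 + ‖y‖) ^ (-s)) ^ um) := by
    apply ENNReal.measurable_ofReal.comp
    exact (((measurable_const.add measurable_norm).pow measurable_const).pow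
      measurable_const)
  have hg : Measurable g := (measurable_const.mul hmeas1).add hmeasR
  have hle : ∀ y ∈ E, ENNReal.ofReal (F y ^ p y) ≤ g y := by
    intro y hy
    have hb : Real.exp 1 ≤ Real.exp 1 + ‖y‖ := le_add_of_nonneg_right (norm_nonneg y)
    have key := ptwise (F y) (p y) (q y) um c s (Real.exp 1 + ‖y‖)
      (hF01 y hy).1 (hF01 y hy).2 (hump y) (humq y) hum0 hb (hpq y) hs
    calc ENNReal.ofReal (F y ^ p y)
        ≤ ENNReal.ofReal (Real.exp (s * c) * F y ^ q y +
            ((Real.exp 1 + ‖y‖) ^ (-s)) ^ um) := ENNReal.ofReal_le_ofReal key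
      _ ≤ ENNReal.ofReal (Real.exp (s * c) * F y ^ q y) +
            ENNReal.ofReal (((Real.exp 1 + ‖y‖) ^ (-s)) ^ um) := ENNReal.ofReal_add_le
      _ = g y := by
          rw [hg_def, ENNReal.ofReal_mul (Real.exp_nonneg _)]
  calc (∫⁻ y in E, ENNReal.ofReal (F y ^ p y))
      ≤ ∫⁻ y in E, g y := setLIntegral_mono' hE hle
    _ = ENNReal.ofReal (Real.exp (s * c)) * (∫⁻ y in E, ENNReal.ofReal (F y ^ q y)) +
        ∫⁻ y in E, ENNReal.ofReal (((Real.exp 1 + ‖y‖) ^ (-s)) ^ um) := by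
        rw [hg_def, lintegral_add_left (f := fun y => ENNReal.ofReal (Real.exp (s * c)) * ENNReal.ofReal (F y ^ q y)) (measurable_const.mul hmeas1),
          lintegral_const_mul' _ _ ENNReal.ofReal_ne_top]

/-- Let `u : ℝⁿ → [0,∞)` be log-Hölder continuous at infinity with
constant `Ci` and limit `0 < uinf`, let `um` be a (nonnegative) lower bound for `u`, and
for `t > 0` set `R_t(x) = (e + |x|)^{-nt}`. Then for any measurable set `E` of finite
measure and any measurable `F` with `0 ≤ F ≤ 1` on `E`:
`∫_E F^{u(y)} ≤ e^{ntCi} ∫_E F^{uinf} + ∫_E R_t^{um}` and symmetrically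
`∫_E F^{uinf} ≤ e^{ntCi} ∫_E F^{u(y)} + ∫_E R_t^{um}`. -/
theorem stmt4 {n : ℕ} (u : Euc n → ℝ) (Ci uinf um t : ℝ)
    (hu0 : ∀ x, 0 ≤ u x) (hum : ∀ x, um ≤ u x) (hum0 : 0 ≤ um)
    (hui : InfLH u Ci uinf) (huinf : 0 < uinf) (ht : 0 < t)
    (hu : Measurable u)
    (E : Set (Euc n)) (hE : MeasurableSet E) (hEfin : volume E < ∞)
    (F : Euc n → ℝ) (hF : Measurable F)
    (hF01 : ∀ y ∈ E, 0 ≤ F y ∧ F y ≤ 1) :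
    (∫⁻ y in E, ENNReal.ofReal (F y ^ u y)) ≤
        ENNReal.ofReal (Real.exp ((n : ℝ) * t * Ci)) * (∫⁻ y in E, ENNReal.ofReal (F y ^ uinf)) +
          ∫⁻ y in E, ENNReal.ofReal (((Real.exp 1 + ‖y‖) ^ (-((n : ℝ) * t))) ^ um) ∧
      (∫⁻ y in E, ENNReal.ofReal (F y ^ uinf)) ≤
        ENNReal.ofReal (Real.exp ((n : ℝ) * t * Ci)) * (∫⁻ y in E, ENNReal.ofReal (F y ^ u y)) +
          ∫⁻ y in E, ENNReal.ofReal (((Real.exp 1 + ‖y‖) ^ (-((n : ℝ) * t))) ^ um) := by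
  rcases Nat.eq_zero_or_pos n with hn | hn
  · -- trivial case n = 0
    subst hn
    simp only [Nat.cast_zero, zero_mul, neg_zero, Real.rpow_zero, Real.one_rpow,
      Real.exp_zero, ENNReal.ofReal_one, one_mul]
    have haux : ∀ (e : Euc 0 → ℝ), (∀ y, 0 ≤ e y) →
        (∫⁻ y in E, ENNReal.ofReal (F y ^ e y)) ≤ ∫⁻ y in E, (1:ℝ≥0∞) := by
      intro e he
      apply setLIntegral_mono' hE
      intro y hy
      exact ENNReal.ofReal_le_one.mpr
        (Real.rpow_le_one (hF01 y hy).1 (hF01 y hy).2 (he y))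
    constructor
    · exact le_trans (haux u hu0) (self_le_add_left _ _)
    · exact le_trans (haux (fun _ => uinf) (fun _ => huinf.le)) (self_le_add_left _ _)
  · -- n ≥ 1 : first show um ≤ uinf
    have huminf : um ≤ uinf := by
      have hM : ∀ M : ℝ, 0 ≤ M → um ≤ uinf + Ci / Real.log (Real.exp 1 + M) := by
        intro M hM
        set x : Euc n := M • EuclideanSpace.single (⟨0, hn⟩ : Fin n) (1:ℝ) with hx
        have hnx : ‖x‖ = M := by
          rw [hx, norm_smul, EuclideanSpace.norm_single]
          simp [abs_of_nonneg hM]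
        have h1 := hui x
        have h2 : u x - uinf ≤ Ci / Real.log (Real.exp 1 + ‖x‖) :=
          le_trans (le_abs_self _) h1
        rw [hnx] at h2
        have := hum x
        linarith
      have htend : Filter.Tendsto (fun M : ℝ => uinf + Ci / Real.log (Real.exp 1 + M))
          Filter.atTop (nhds uinf) := by
        have h0 : Filter.Tendsto (fun M : ℝ => Real.log (Real.exp 1 + M))
            Filter.atTop Filter.atTop :=
          Real.tendsto_log_atTop.comp (Filter.tendsto_atTop_add_const_left _ _ Filter.tendsto_id)
        have h1 : Filter.Tendsto (fun M : ℝ => Ci / Real.log (Real.exp 1 + M))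
            Filter.atTop (nhds 0) := Filter.Tendsto.div_atTop tendsto_const_nhds h0
        have := Filter.Tendsto.add (tendsto_const_nhds (x := uinf) (f := Filter.atTop)) h1
        simpa using this
      exact ge_of_tendsto htend (Filter.eventually_atTop.2 ⟨0, fun M hM' => hM M hM'⟩)
    have hs : 0 ≤ (n : ℝ) * t := mul_nonneg (Nat.cast_nonneg n) ht.le
    constructor
    · exact integ_aux u (fun _ => uinf) measurable_const um Ci ((n:ℝ)*t) hum0 hum
        (fun _ => huminf) hui hs E hE F hF hF01
    · refine integ_aux (fun _ => uinf) u hu um Ci ((n:ℝ)*t) hum0 (fun _ => huminf) hum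
        (fun y => ?_) hs E hE F hF hF01
      rw [abs_sub_comm]
      exact hui y
end
end

section
/- Hölder's inequality in variable Lebesgue spaces: given an exponent function p(·), for all f ∈ L^{p(·)}(ℝ^n) and g ∈ L^{p'(·)}(ℝ^n), the product fg is integrable and ∫ |fg| dx ≤ 4 ‖f‖_{L^{p(·)}} ‖g‖_{L^{p'(·)}}; moreover if 1 < p_− ≤ p_+ < ∞ the constant 4 can be replaced by 2. -/
open MeasureTheory ENNReal

noncomputable section

/-- The modular of a variable Lebesgue space with (extended-real valued) exponent `p`:
the integral of `f ^ p` over the set where `p` is finite plus the essential supremum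
of `f` over the set where `p = ∞`. -/
def modularE {n : ℕ} (p : Euc n → ℝ≥0∞) (f : Euc n → ℝ≥0∞) : ℝ≥0∞ :=
  (∫⁻ x in {x | p x ≠ ∞}, f x ^ (p x).toReal) +
    essSup f (volume.restrict {x | p x = ∞})

/-- The Luxemburg norm of the variable Lebesgue space `L^{p(·)}(ℝⁿ)`. -/
def luxNormE {n : ℕ} (p : Euc n → ℝ≥0∞) (f : Euc n → ℝ≥0∞) : ℝ≥0∞ :=
  sInf {l : ℝ≥0∞ | l ≠ 0 ∧ modularE p (fun x => f x / l) ≤ 1}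

/- ### Auxiliary lemmas -/

section Aux

/-- Pointwise conjugacy facts. -/
lemma aux_q_eq_one {a b : ℝ≥0∞} (hpq : a⁻¹ + b⁻¹ = 1) (h : a = ∞) : b = 1 := by
  rw [h] at hpq
  simp at hpq
  exact hpq

lemma aux_q_eq_top {a b : ℝ≥0∞} (hpq : a⁻¹ + b⁻¹ = 1) (h : a = 1) : b = ∞ := by
  rw [h, inv_one] at hpq
  have h0 : b⁻¹ = 0 := by
    have : (1 : ℝ≥0∞) + b⁻¹ = 1 + 0 := by simpa using hpq
    exact (ENNReal.add_right_inj one_ne_top).1 this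
  rwa [ENNReal.inv_eq_zero] at h0

lemma aux_q_ne_top {a b : ℝ≥0∞} (hpq : a⁻¹ + b⁻¹ = 1) (h : a ≠ 1) : b ≠ ∞ := by
  intro hb
  rw [hb] at hpq
  simp at hpq
  exact h hpq

lemma aux_conj {a b : ℝ≥0∞} (hpq : a⁻¹ + b⁻¹ = 1) (ha1 : 1 ≤ a)
    (hat : a ≠ ∞) (hane : a ≠ 1) : Real.HolderConjugate a.toReal b.toReal := by
  have hainv : a⁻¹ ≠ ∞ := by
    rw [ENNReal.inv_ne_top]
    intro h0; rw [h0] at ha1; simp at ha1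
  have hbinv : b⁻¹ ≠ ∞ := by
    intro h; rw [h] at hpq; simp at hpq
  rw [Real.holderConjugate_iff]
  constructor
  · have h1 : (1 : ℝ≥0∞) < a := lt_of_le_of_ne ha1 (Ne.symm hane)
    have := (ENNReal.toReal_lt_toReal one_ne_top hat).2 h1
    simpa using this
  · have := congrArg ENNReal.toReal hpq
    rwa [ENNReal.toReal_add hainv hbinv, ENNReal.toReal_inv, ENNReal.toReal_inv,
      ENNReal.toReal_one] at this

/-- Monotone limiting argument: if `x ≤ c·λ·μ` for all `λ > A`, `μ > B` (finite),
then `x ≤ c·A·B`. -/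
lemma aux_limit {x A B c : ℝ≥0∞} (hc0 : c ≠ 0) (hc : c ≠ ∞) (hA : A ≠ ∞) (hB : B ≠ ∞)
    (h : ∀ lam mu : ℝ≥0∞, A < lam → lam ≠ ∞ → B < mu → mu ≠ ∞ → x ≤ c * lam * mu) :
    x ≤ c * A * B := by
  have step1 : ∀ mu : ℝ≥0∞, B < mu → mu ≠ ∞ → x ≤ c * A * mu := by
    intro mu hBmu hmu
    have hmu0 : mu ≠ 0 := (lt_of_le_of_lt zero_le hBmu).ne'
    have hall : ∀ lam : ℝ≥0∞, A < lam → x / (c * mu) ≤ lam := by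
      intro lam hAlam
      rcases eq_or_ne lam ∞ with hlam | hlam
      · simp [hlam]
      · rw [ENNReal.div_le_iff_le_mul (Or.inl (mul_ne_zero hc0 hmu0))
          (Or.inl (ENNReal.mul_ne_top hc hmu))]
        calc x ≤ c * lam * mu := h lam mu hAlam hlam hBmu hmu
          _ = lam * (c * mu) := by ring
    have hdA : x / (c * mu) ≤ A := le_of_forall_gt_imp_ge_of_dense hall
    have hx : x ≤ A * (c * mu) :=
      (ENNReal.div_le_iff_le_mul (Or.inl (mul_ne_zero hc0 hmu0))
        (Or.inl (ENNReal.mul_ne_top hc hmu))).1 hdA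
    calc x ≤ A * (c * mu) := hx
      _ = c * A * mu := by ring
  rcases eq_or_ne A 0 with hA0 | hA0
  · have hB1 : B < B + 1 := ENNReal.lt_add_right hB one_ne_zero
    have := step1 (B + 1) hB1 (by simp [ENNReal.add_ne_top, hB])
    rw [hA0] at this ⊢
    simpa using this
  · have hcA0 : c * A ≠ 0 := mul_ne_zero hc0 hA0
    have hcAt : c * A ≠ ∞ := ENNReal.mul_ne_top hc hA
    have hall : ∀ mu : ℝ≥0∞, B < mu → x / (c * A) ≤ mu := by
      intro mu hBmu
      rcases eq_or_ne mu ∞ with hmu | hmu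
      · simp [hmu]
      · rw [ENNReal.div_le_iff_le_mul (Or.inl hcA0) (Or.inl hcAt)]
        calc x ≤ c * A * mu := step1 mu hBmu hmu
          _ = mu * (c * A) := by ring
    have hdB : x / (c * A) ≤ B := le_of_forall_gt_imp_ge_of_dense hall
    have hx : x ≤ B * (c * A) :=
      (ENNReal.div_le_iff_le_mul (Or.inl hcA0) (Or.inl hcAt)).1 hdB
    calc x ≤ B * (c * A) := hx
      _ = c * A * B := by ring

/-- If `λ` is strictly larger than the Luxemburg norm, then the modular of `F/λ` is `≤ 1`. -/
lemma aux_lux_mem {n : ℕ} (p : Euc n → ℝ≥0∞) (F : Euc n → ℝ≥0∞) {lam : ℝ≥0∞}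
    (h : luxNormE p F < lam) : modularE p (fun x => F x / lam) ≤ 1 := by
  obtain ⟨l, hl, hllam⟩ := sInf_lt_iff.1 h
  obtain ⟨hl0, hlmod⟩ := hl
  refine le_trans ?_ hlmod
  have hdiv : ∀ x, F x / lam ≤ F x / l := fun x => ENNReal.div_le_div le_rfl hllam.le
  refine add_le_add (lintegral_mono fun x => ?_)
    (essSup_mono_ae (Filter.Eventually.of_forall fun x => hdiv x))
  exact ENNReal.rpow_le_rpow (hdiv x) ENNReal.toReal_nonneg

variable {n : ℕ} (p q : Euc n → ℝ≥0∞)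

/-- Bound on the part where both exponents are finite (i.e. `1 < p < ∞`). -/
lemma aux_bound_mid (hp1 : ∀ x, 1 ≤ p x) (hpq : ∀ x, (p x)⁻¹ + (q x)⁻¹ = 1)
    (hpm : Measurable p) (u v : Euc n → ℝ≥0∞) (hu : Measurable u)
    (hmu : modularE p u ≤ 1) (hmv : modularE q v ≤ 1) :
    (∫⁻ x in {x | p x ≠ ∞ ∧ p x ≠ 1}, u x * v x) ≤ 2 := by
  have hS : MeasurableSet {x | p x ≠ ∞ ∧ p x ≠ 1} := by
    have h1 : MeasurableSet {x | p x ≠ ∞} := (hpm (measurableSet_singleton ∞)).compl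
    have h2 : MeasurableSet {x | p x ≠ 1} := (hpm (measurableSet_singleton 1)).compl
    exact h1.inter h2
  have hpoint : ∀ x ∈ {x | p x ≠ ∞ ∧ p x ≠ 1},
      u x * v x ≤ u x ^ (p x).toReal + v x ^ (q x).toReal := by
    intro x hx
    have hconj := aux_conj (hpq x) (hp1 x) hx.1 hx.2
    calc u x * v x
        ≤ u x ^ (p x).toReal / ENNReal.ofReal (p x).toReal +
          v x ^ (q x).toReal / ENNReal.ofReal (q x).toReal :=
          ENNReal.young_inequality (u x) (v x) hconj
      _ ≤ u x ^ (p x).toReal / 1 + v x ^ (q x).toReal / 1 := by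
          gcongr
          · exact ENNReal.one_le_ofReal.2 hconj.lt.le
          · exact ENNReal.one_le_ofReal.2 hconj.symm.lt.le
      _ = u x ^ (p x).toReal + v x ^ (q x).toReal := by simp
  calc (∫⁻ x in {x | p x ≠ ∞ ∧ p x ≠ 1}, u x * v x)
      ≤ ∫⁻ x in {x | p x ≠ ∞ ∧ p x ≠ 1}, (u x ^ (p x).toReal + v x ^ (q x).toReal) :=
        setLIntegral_mono' hS hpoint
    _ = (∫⁻ x in {x | p x ≠ ∞ ∧ p x ≠ 1}, u x ^ (p x).toReal) +
        ∫⁻ x in {x | p x ≠ ∞ ∧ p x ≠ 1}, v x ^ (q x).toReal :=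
        lintegral_add_left (hu.pow hpm.ennreal_toReal) _
    _ ≤ 1 + 1 := by
        refine add_le_add ?_ ?_
        · calc (∫⁻ x in {x | p x ≠ ∞ ∧ p x ≠ 1}, u x ^ (p x).toReal)
              ≤ ∫⁻ x in {x | p x ≠ ∞}, u x ^ (p x).toReal :=
                lintegral_mono_set fun x hx => hx.1
            _ ≤ modularE p u := le_add_right le_rfl
            _ ≤ 1 := hmu
        · calc (∫⁻ x in {x | p x ≠ ∞ ∧ p x ≠ 1}, v x ^ (q x).toReal)
              ≤ ∫⁻ x in {x | q x ≠ ∞}, v x ^ (q x).toReal := by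
                refine lintegral_mono_set fun x hx => ?_
                exact aux_q_ne_top (hpq x) hx.2
            _ ≤ modularE q v := le_add_right le_rfl
            _ ≤ 1 := hmv
    _ = 2 := by norm_num

/-- Bound on the part where `p = ∞`. -/
lemma aux_bound_top (hpq : ∀ x, (p x)⁻¹ + (q x)⁻¹ = 1)
    (hpm : Measurable p) (u v : Euc n → ℝ≥0∞)
    (hmu : modularE p u ≤ 1) (hmv : modularE q v ≤ 1) :
    (∫⁻ x in {x | p x = ∞}, u x * v x) ≤ 1 := by
  have hS : MeasurableSet {x | p x = ∞} := hpm (measurableSet_singleton ∞)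
  have hess : essSup u (volume.restrict {x | p x = ∞}) ≤ 1 :=
    le_trans (le_add_left le_rfl) hmu
  have hae : ∀ᵐ x ∂(volume.restrict {x | p x = ∞}), u x ≤ 1 :=
    (ae_le_essSup u).mono fun x hx => le_trans hx hess
  calc (∫⁻ x in {x | p x = ∞}, u x * v x)
      ≤ ∫⁻ x in {x | p x = ∞}, v x := by
        refine lintegral_mono_ae (hae.mono fun x hx => ?_)
        calc u x * v x ≤ 1 * v x := mul_le_mul_left hx _
          _ = v x := one_mul _
    _ = ∫⁻ x in {x | p x = ∞}, v x ^ (q x).toReal := by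
        refine setLIntegral_congr_fun hS (fun x hx => ?_)
        have hq1 : q x = 1 := aux_q_eq_one (hpq x) hx
        rw [hq1]
        simp
    _ ≤ ∫⁻ x in {x | q x ≠ ∞}, v x ^ (q x).toReal := by
        refine lintegral_mono_set fun x hx => ?_
        have hq1 : q x = 1 := aux_q_eq_one (hpq x) hx
        simp [hq1]
    _ ≤ modularE q v := le_add_right le_rfl
    _ ≤ 1 := hmv

/-- Bound on the part where `p = 1` (so `q = ∞`). -/
lemma aux_bound_one (hpq : ∀ x, (p x)⁻¹ + (q x)⁻¹ = 1)
    (hpm : Measurable p) (u v : Euc n → ℝ≥0∞)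
    (hmu : modularE p u ≤ 1) (hmv : modularE q v ≤ 1) :
    (∫⁻ x in {x | p x = 1}, u x * v x) ≤ 1 := by
  have hS : MeasurableSet {x | p x = 1} := hpm (measurableSet_singleton 1)
  have hsub : {x | p x = 1} ⊆ {x | q x = ∞} := fun x hx => aux_q_eq_top (hpq x) hx
  have hess : essSup v (volume.restrict {x | q x = ∞}) ≤ 1 :=
    le_trans (le_add_left le_rfl) hmv
  have hae : ∀ᵐ x ∂(volume.restrict {x | q x = ∞}), v x ≤ 1 :=
    (ae_le_essSup v).mono fun x hx => le_trans hx hess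
  have hae' : ∀ᵐ x ∂(volume.restrict {x | p x = 1}), v x ≤ 1 :=
    ae_restrict_of_ae_restrict_of_subset hsub hae
  calc (∫⁻ x in {x | p x = 1}, u x * v x)
      ≤ ∫⁻ x in {x | p x = 1}, u x := by
        refine lintegral_mono_ae (hae'.mono fun x hx => ?_)
        calc u x * v x ≤ u x * 1 := mul_le_mul_right hx _
          _ = u x := mul_one _
    _ = ∫⁻ x in {x | p x = 1}, u x ^ (p x).toReal := by
        refine setLIntegral_congr_fun hS (fun x hx => ?_)
        rw [hx]
        simp
    _ ≤ ∫⁻ x in {x | p x ≠ ∞}, u x ^ (p x).toReal := by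
        refine lintegral_mono_set fun x hx => ?_
        simp only [Set.mem_setOf_eq] at hx ⊢
        simp [hx]
    _ ≤ modularE p u := le_add_right le_rfl
    _ ≤ 1 := hmu

/-- Decomposition of the full integral into the three regions. -/
lemma aux_decomp (u v : Euc n → ℝ≥0∞) (hpm : Measurable p) :
    (∫⁻ x, u x * v x) ≤ (∫⁻ x in {x | p x ≠ ∞ ∧ p x ≠ 1}, u x * v x) +
      ((∫⁻ x in {x | p x = ∞}, u x * v x) + (∫⁻ x in {x | p x = 1}, u x * v x)) := by
  have hS : MeasurableSet {x | p x ≠ ∞ ∧ p x ≠ 1} := by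
    have h1 : MeasurableSet {x | p x ≠ ∞} := (hpm (measurableSet_singleton ∞)).compl
    have h2 : MeasurableSet {x | p x ≠ 1} := (hpm (measurableSet_singleton 1)).compl
    exact h1.inter h2
  have hcompl : {x | p x ≠ ∞ ∧ p x ≠ 1}ᶜ = {x | p x = ∞} ∪ {x | p x = 1} := by
    ext x
    simp only [Set.mem_compl_iff, Set.mem_setOf_eq, Set.mem_union]
    tauto
  calc (∫⁻ x, u x * v x)
      = (∫⁻ x in {x | p x ≠ ∞ ∧ p x ≠ 1}, u x * v x) +
        ∫⁻ x in {x | p x ≠ ∞ ∧ p x ≠ 1}ᶜ, u x * v x :=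
        (lintegral_add_compl _ hS).symm
    _ ≤ (∫⁻ x in {x | p x ≠ ∞ ∧ p x ≠ 1}, u x * v x) +
        ((∫⁻ x in {x | p x = ∞}, u x * v x) + (∫⁻ x in {x | p x = 1}, u x * v x)) := by
        gcongr
        rw [hcompl]
        exact lintegral_union_le _ _ _

end Aux

/-- Hölder's inequality in variable Lebesgue spaces: for an exponent
function `p(·)` with pointwise conjugate `q(·)` (so `1/p(x) + 1/q(x) = 1`), and all
`f ∈ L^{p(·)}(ℝⁿ)`, `g ∈ L^{q(·)}(ℝⁿ)`, the product `fg` is integrable and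
`∫ |fg| ≤ 4 ‖f‖_{L^{p(·)}} ‖g‖_{L^{q(·)}}`; moreover if `1 < pm ≤ p ≤ pp < ∞`, the
constant `4` can be replaced by `2`. -/
theorem stmt8 {n : ℕ} (p q : Euc n → ℝ≥0∞)
    (hp1 : ∀ x, 1 ≤ p x) (hpq : ∀ x, (p x)⁻¹ + (q x)⁻¹ = 1)
    (hpm : Measurable p) (f g : Euc n → ℝ) (hf : Measurable f) (hg : Measurable g)
    (hfL : luxNormE p (fun x => ENNReal.ofReal |f x|) ≠ ∞)
    (hgL : luxNormE q (fun x => ENNReal.ofReal |g x|) ≠ ∞) :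
    Integrable (fun x => f x * g x) ∧
      (∫⁻ x, ENNReal.ofReal |f x * g x|) ≤
        4 * luxNormE p (fun x => ENNReal.ofReal |f x|) *
          luxNormE q (fun x => ENNReal.ofReal |g x|) ∧
      (∀ pm pp : ℝ≥0∞, 1 < pm → pp < ∞ → (∀ x, pm ≤ p x ∧ p x ≤ pp) →
        (∫⁻ x, ENNReal.ofReal |f x * g x|) ≤
          2 * luxNormE p (fun x => ENNReal.ofReal |f x|) *
            luxNormE q (fun x => ENNReal.ofReal |g x|)) := by
  set F : Euc n → ℝ≥0∞ := fun x => ENNReal.ofReal |f x| with hF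
  set G : Euc n → ℝ≥0∞ := fun x => ENNReal.ofReal |g x| with hG
  have hFmeas : Measurable F := ENNReal.measurable_ofReal.comp hf.abs
  have hGmeas : Measurable G := ENNReal.measurable_ofReal.comp hg.abs
  have hfg : ∀ x, ENNReal.ofReal |f x * g x| = F x * G x := by
    intro x
    rw [abs_mul, ENNReal.ofReal_mul (abs_nonneg _)]
  have hfgint : (∫⁻ x, ENNReal.ofReal |f x * g x|) = ∫⁻ x, F x * G x := by
    simp only [hfg]
  set A := luxNormE p F with hA
  set B := luxNormE q G with hB
  -- the key scaling inequality
  have key : ∀ lam mu : ℝ≥0∞, A < lam → lam ≠ ∞ → B < mu → mu ≠ ∞ →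
      (∫⁻ x, F x * G x) ≤
        ((∫⁻ x in {x | p x ≠ ∞ ∧ p x ≠ 1},
            (F x / lam) * (G x / mu)) +
          ((∫⁻ x in {x | p x = ∞}, (F x / lam) * (G x / mu)) +
            (∫⁻ x in {x | p x = 1}, (F x / lam) * (G x / mu)))) * lam * mu := by
    intro lam mu hAlam hlamt hBmu hmut
    have hlam0 : lam ≠ 0 := (lt_of_le_of_lt zero_le hAlam).ne'
    have hmu0 : mu ≠ 0 := (lt_of_le_of_lt zero_le hBmu).ne'
    have hrw : ∀ x, F x * G x = (lam * mu) * ((F x / lam) * (G x / mu)) := by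
      intro x
      calc F x * G x = (lam * (F x / lam)) * (mu * (G x / mu)) := by
            rw [ENNReal.mul_div_cancel hlam0 hlamt, ENNReal.mul_div_cancel hmu0 hmut]
        _ = (lam * mu) * ((F x / lam) * (G x / mu)) := by ring
    have hmeasuv : Measurable fun x => (F x / lam) * (G x / mu) :=
      (hFmeas.div_const lam).mul (hGmeas.div_const mu)
    calc (∫⁻ x, F x * G x)
        = ∫⁻ x, (lam * mu) * ((F x / lam) * (G x / mu)) := by simp only [hrw]
      _ = (lam * mu) * ∫⁻ x, (F x / lam) * (G x / mu) := lintegral_const_mul _ hmeasuv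
      _ ≤ (lam * mu) * ((∫⁻ x in {x | p x ≠ ∞ ∧ p x ≠ 1},
              (F x / lam) * (G x / mu)) +
            ((∫⁻ x in {x | p x = ∞}, (F x / lam) * (G x / mu)) +
              (∫⁻ x in {x | p x = 1}, (F x / lam) * (G x / mu)))) := by
          gcongr
          exact aux_decomp p (fun x => F x / lam) (fun x => G x / mu) hpm
      _ = _ := by ring
  have key4 : ∀ lam mu : ℝ≥0∞, A < lam → lam ≠ ∞ → B < mu → mu ≠ ∞ →
      (∫⁻ x, F x * G x) ≤ 4 * lam * mu := by
    intro lam mu hAlam hlamt hBmu hmut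
    have hmodu : modularE p (fun x => F x / lam) ≤ 1 := aux_lux_mem p F hAlam
    have hmodv : modularE q (fun x => G x / mu) ≤ 1 := aux_lux_mem q G hBmu
    refine le_trans (key lam mu hAlam hlamt hBmu hmut) ?_
    gcongr
    calc (∫⁻ x in {x | p x ≠ ∞ ∧ p x ≠ 1}, (F x / lam) * (G x / mu)) +
          ((∫⁻ x in {x | p x = ∞}, (F x / lam) * (G x / mu)) +
            (∫⁻ x in {x | p x = 1}, (F x / lam) * (G x / mu)))
        ≤ 2 + (1 + 1) := by
          refine add_le_add ?_ (add_le_add ?_ ?_)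
          · exact aux_bound_mid p q hp1 hpq hpm _ _ (hFmeas.div_const lam) hmodu hmodv
          · exact aux_bound_top p q hpq hpm _ _ hmodu hmodv
          · exact aux_bound_one p q hpq hpm _ _ hmodu hmodv
      _ = 4 := by norm_num
  have h4 : (∫⁻ x, F x * G x) ≤ 4 * A * B :=
    aux_limit (by norm_num) (by norm_num) hfL hgL key4
  have hABfin : 4 * A * B ≠ ∞ :=
    ENNReal.mul_ne_top (ENNReal.mul_ne_top (by norm_num) hfL) hgL
  refine ⟨?_, ?_, ?_⟩
  · -- Integrability
    refine ⟨(hf.mul hg).aestronglyMeasurable, ?_⟩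
    rw [hasFiniteIntegral_iff_norm]
    have heq : (∫⁻ x, ENNReal.ofReal ‖f x * g x‖) = ∫⁻ x, F x * G x := by
      simp only [Real.norm_eq_abs, hfg]
    rw [heq]
    exact lt_of_le_of_lt h4 (lt_top_iff_ne_top.2 hABfin)
  · rw [hfgint]
    exact h4
  · intro pm pp hpm1 hppt hple
    have hempty1 : {x | p x = ∞} = (∅ : Set (Euc n)) := by
      ext x
      simp only [Set.mem_setOf_eq, Set.mem_empty_iff_false, iff_false]
      exact fun h => (lt_top_iff_ne_top.1 (lt_of_le_of_lt (hple x).2 hppt)) h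
    have hempty2 : {x | p x = 1} = (∅ : Set (Euc n)) := by
      ext x
      simp only [Set.mem_setOf_eq, Set.mem_empty_iff_false, iff_false]
      intro h
      have := lt_of_lt_of_le hpm1 (hple x).1
      rw [h] at this
      exact lt_irrefl _ this
    have key2 : ∀ lam mu : ℝ≥0∞, A < lam → lam ≠ ∞ → B < mu → mu ≠ ∞ →
        (∫⁻ x, F x * G x) ≤ 2 * lam * mu := by
      intro lam mu hAlam hlamt hBmu hmut
      have hmodu : modularE p (fun x => F x / lam) ≤ 1 := aux_lux_mem p F hAlam
      have hmodv : modularE q (fun x => G x / mu) ≤ 1 := aux_lux_mem q G hBmu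
      refine le_trans (key lam mu hAlam hlamt hBmu hmut) ?_
      gcongr
      calc (∫⁻ x in {x | p x ≠ ∞ ∧ p x ≠ 1}, (F x / lam) * (G x / mu)) +
            ((∫⁻ x in {x | p x = ∞}, (F x / lam) * (G x / mu)) +
              (∫⁻ x in {x | p x = 1}, (F x / lam) * (G x / mu)))
          ≤ 2 + (0 + 0) := by
            refine add_le_add ?_ (add_le_add ?_ ?_)
            · exact aux_bound_mid p q hp1 hpq hpm _ _ (hFmeas.div_const lam) hmodu hmodv
            · rw [hempty1]
              simp
            · rw [hempty2]
              simp
        _ = 2 := by norm_num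
    rw [hfgint]
    exact aux_limit (by norm_num) (by norm_num) hfL hgL key2
end
end
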